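/- arXiv:1203.6114 — 2 statements merged into one kernel-verified Lean document; each statement's English description precedes it below -/
import Mathlib

section
/- If u is a pointwise stable solution of the system Δu = ∇H(u) on ℝ^N, then u is a stable solution, i.e. for all ζ_1,…,ζ_m ∈ C¹_c(ℝ^N): Σ_i ∫ |∇ζ_i|² dx + Σ_{i,j} ∫ H_{u_iu_j}(u) ζ_i ζ_j dx ≥ 0. -/
open MeasureTheory Metric Filter Finset

noncomputable section

/-- Partial derivative of `f` at `x` in the `k`-th coordinate direction of `ℝ^N`. -/
def pd {N : ℕ} (f : EuclideanSpace ℝ (Fin N) → ℝ) (k : Fin N)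
    (x : EuclideanSpace ℝ (Fin N)) : ℝ :=
  fderiv ℝ f x (EuclideanSpace.single k 1)

/-- Laplacian of `f` at `x`: the sum of the pure second partial derivatives. -/
def lap {N : ℕ} (f : EuclideanSpace ℝ (Fin N) → ℝ) (x : EuclideanSpace ℝ (Fin N)) : ℝ :=
  ∑ k, pd (pd f k) k x

/-- `H_{u_i}`, the `i`-th partial derivative of `H : ℝ^m → ℝ`. -/
def Hp {m : ℕ} (H : EuclideanSpace ℝ (Fin m) → ℝ) (i : Fin m)
    (p : EuclideanSpace ℝ (Fin m)) : ℝ :=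
  fderiv ℝ H p (EuclideanSpace.single i 1)

/-- `H_{u_i u_j}`, the second mixed partial derivative of `H : ℝ^m → ℝ`. -/
def Hpp {m : ℕ} (H : EuclideanSpace ℝ (Fin m) → ℝ) (i j : Fin m)
    (p : EuclideanSpace ℝ (Fin m)) : ℝ :=
  fderiv ℝ (Hp H i) p (EuclideanSpace.single j 1)

/-- `u` solves the system `Δ u = ∇H(u)` on `Ω`. -/
def IsSolution {N m : ℕ} (H : EuclideanSpace ℝ (Fin m) → ℝ)
    (u : EuclideanSpace ℝ (Fin N) → EuclideanSpace ℝ (Fin m))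
    (Ω : Set (EuclideanSpace ℝ (Fin N))) : Prop :=
  ∀ i : Fin m, ∀ x ∈ Ω, lap (fun y => u y i) x = Hp H i (u x)

/-- `u` is a stable solution of `Δ u = ∇H(u)` on `Ω`: the second variation of the
energy is nonnegative on test functions `ζ_1, …, ζ_m ∈ C¹_c(Ω)`. -/
def Stable {N m : ℕ} (H : EuclideanSpace ℝ (Fin m) → ℝ)
    (u : EuclideanSpace ℝ (Fin N) → EuclideanSpace ℝ (Fin m))
    (Ω : Set (EuclideanSpace ℝ (Fin N))) : Prop :=
  ∀ ζ : Fin m → EuclideanSpace ℝ (Fin N) → ℝ,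
    (∀ i, ContDiff ℝ 1 (ζ i)) → (∀ i, HasCompactSupport (ζ i)) →
    (∀ i, tsupport (ζ i) ⊆ Ω) →
    0 ≤ (∑ i, ∫ x in Ω, ‖gradient (ζ i) x‖ ^ 2) +
        ∑ i, ∑ j, ∫ x in Ω, Hpp H i j (u x) * ζ i x * ζ j x

/-- `u` is a pointwise stable solution of `Δ u = ∇H(u)` on `Ω`: there are `λ ≥ 0`
and nowhere-vanishing `C²` functions `φ_i` with `Δ φ_i = Σ_j H_{u_i u_j}(u) φ_j - λ φ_i`
and `H_{u_i u_j}(u) φ_i φ_j ≤ 0` for `i < j`. -/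
def PointwiseStable {N m : ℕ} (H : EuclideanSpace ℝ (Fin m) → ℝ)
    (u : EuclideanSpace ℝ (Fin N) → EuclideanSpace ℝ (Fin m))
    (Ω : Set (EuclideanSpace ℝ (Fin N))) : Prop :=
  ∃ (lam : ℝ) (φ : Fin m → EuclideanSpace ℝ (Fin N) → ℝ),
    0 ≤ lam ∧ (∀ i, ContDiff ℝ 2 (φ i)) ∧ (∀ i, ∀ x ∈ Ω, φ i x ≠ 0) ∧
    (∀ i, ∀ x ∈ Ω, lap (φ i) x = (∑ j, Hpp H i j (u x) * φ j x) - lam * φ i x) ∧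
    (∀ i j : Fin m, i < j → ∀ x ∈ Ω, Hpp H i j (u x) * φ i x * φ j x ≤ 0)

/-- The system `Δ u = ∇H(u)` is orientable along `u`: there exist nonzero `C¹`
functions `θ_i`, none of which changes sign, with `H_{u_i u_j}(u) θ_i θ_j ≤ 0` for `i < j`. -/
def OrientableAlong {N m : ℕ} (H : EuclideanSpace ℝ (Fin m) → ℝ)
    (u : EuclideanSpace ℝ (Fin N) → EuclideanSpace ℝ (Fin m)) : Prop :=
  ∃ θ : Fin m → EuclideanSpace ℝ (Fin N) → ℝ,
    (∀ i, ContDiff ℝ 1 (θ i)) ∧ (∀ i, ∃ x, θ i x ≠ 0) ∧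
    (∀ i, (∀ x, 0 ≤ θ i x) ∨ (∀ x, θ i x ≤ 0)) ∧
    (∀ i j : Fin m, i < j → ∀ x, Hpp H i j (u x) * θ i x * θ j x ≤ 0)

/-- A function `w : ℝ^N → ℝ` is one-dimensional. -/
def OneDim {N : ℕ} (w : EuclideanSpace ℝ (Fin N) → ℝ) : Prop :=
  ∃ (a : EuclideanSpace ℝ (Fin N)) (g : ℝ → ℝ), ∀ x, w x = g (inner ℝ a x)

/-- `u` is an `H`-monotone solution with respect to the coordinate direction `ν`. -/
def HMonotone {N m : ℕ} (H : EuclideanSpace ℝ (Fin m) → ℝ)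
    (u : EuclideanSpace ℝ (Fin N) → EuclideanSpace ℝ (Fin m)) (ν : Fin N) : Prop :=
  (∀ (i : Fin m) (x : EuclideanSpace ℝ (Fin N)), pd (fun y => u y i) ν x ≠ 0) ∧
  (∀ i j : Fin m, i < j → ∀ x,
    Hpp H i j (u x) * (pd (fun y => u y i) ν x * pd (fun y => u y j) ν x) ≤ 0)

/-- The point `(x', t) ∈ ℝ^{n+1}` built from `x' ∈ ℝ^n` and a last coordinate `t`. -/
def snocPt {n : ℕ} (x' : EuclideanSpace ℝ (Fin n)) (t : ℝ) :
    EuclideanSpace ℝ (Fin (n + 1)) := WithLp.toLp 2 (Fin.snoc (WithLp.ofLp x') t : Fin (n + 1) → ℝ)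

section helpers
variable {N : ℕ}

lemma pd_contDiff {f : EuclideanSpace ℝ (Fin N) → ℝ} (hf : ContDiff ℝ 2 f) (k : Fin N) :
    ContDiff ℝ 1 (pd f k) := by
  have h := hf.fderiv_right (m := 1) (by norm_num)
  exact (ContinuousLinearMap.apply ℝ ℝ (EuclideanSpace.single k 1)).contDiff.comp h

lemma pd_continuous {f : EuclideanSpace ℝ (Fin N) → ℝ} (hf : ContDiff ℝ 1 f) (k : Fin N) :
    Continuous (pd f k) :=
  (ContinuousLinearMap.apply ℝ ℝ (EuclideanSpace.single k 1)).continuous.comp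
    (hf.continuous_fderiv one_ne_zero)

lemma pd_hasCompactSupport {f : EuclideanSpace ℝ (Fin N) → ℝ} (hf : HasCompactSupport f)
    (k : Fin N) : HasCompactSupport (pd f k) := by
  have h := (hf.fderiv ℝ).comp_left (g := fun L : EuclideanSpace ℝ (Fin N) →L[ℝ] ℝ =>
    L (EuclideanSpace.single k 1)) rfl
  exact h

lemma pd_mul {f g : EuclideanSpace ℝ (Fin N) → ℝ} {x : EuclideanSpace ℝ (Fin N)}
    (hf : DifferentiableAt ℝ f x) (hg : DifferentiableAt ℝ g x) (k : Fin N) :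
    pd (fun y => f y * g y) k x = pd f k x * g x + f x * pd g k x := by
  unfold pd
  rw [fderiv_fun_mul hf hg]
  simp only [ContinuousLinearMap.add_apply, ContinuousLinearMap.smul_apply, smul_eq_mul]
  ring

lemma norm_gradient_sq {f : EuclideanSpace ℝ (Fin N) → ℝ} {x : EuclideanSpace ℝ (Fin N)}
    (hf : DifferentiableAt ℝ f x) :
    ‖gradient f x‖ ^ 2 = ∑ k, (pd f k x) ^ 2 := by
  have hgrad := hf.hasGradientAt
  have hfd : HasFDerivAt f ((InnerProductSpace.toDual ℝ _) (gradient f x)) x := hgrad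
  have hcoord : ∀ k : Fin N, pd f k x = gradient f x k := by
    intro k
    unfold pd
    rw [hfd.fderiv]
    rw [InnerProductSpace.toDual_apply_apply, EuclideanSpace.inner_single_right]; simp
  rw [EuclideanSpace.norm_eq]
  rw [Real.sq_sqrt (by positivity)]
  exact Finset.sum_congr rfl fun k _ => by rw [hcoord k]; simp [sq]

lemma cc_int {f : EuclideanSpace ℝ (Fin N) → ℝ} (hf : Continuous f)
    (hc : HasCompactSupport f) : Integrable f :=
  hf.integrable_of_hasCompactSupport hc

lemma hcs_sum {ι : Type*} (s : Finset ι)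
    (f : ι → EuclideanSpace ℝ (Fin N) → ℝ) (h : ∀ k ∈ s, HasCompactSupport (f k)) :
    HasCompactSupport (fun x => ∑ k ∈ s, f k x) := by
  classical
  induction s using Finset.induction with
  | empty => simp only [Finset.sum_empty]; exact HasCompactSupport.zero
  | @insert a t ha ih =>
    simp only [Finset.sum_insert ha]
    exact (h a (Finset.mem_insert_self a t)).add
      (ih fun k hk => h k (Finset.mem_insert_of_mem hk))

lemma ibp_core {f g : EuclideanSpace ℝ (Fin N) → ℝ} (hf : ContDiff ℝ 1 f) (hg : ContDiff ℝ 1 g)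
    (hgc : HasCompactSupport g) (k : Fin N) :
    ∫ x, f x * pd g k x = - ∫ x, pd f k x * g x := by
  apply integral_mul_fderiv_eq_neg_fderiv_mul_of_integrable
  · exact cc_int ((pd_continuous hf k).mul hg.continuous) (hgc.mul_left)
  · exact cc_int (hf.continuous.mul (pd_continuous hg k))
      ((pd_hasCompactSupport hgc k).mul_left)
  · exact cc_int (hf.continuous.mul hg.continuous) (hgc.mul_left)
  · exact fun x _ => hf.differentiable one_ne_zero x
  · exact fun x _ => hg.differentiable one_ne_zero x

lemma ibp_lap {φ g : EuclideanSpace ℝ (Fin N) → ℝ} (hφ : ContDiff ℝ 2 φ) (hg : ContDiff ℝ 1 g)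
    (hgc : HasCompactSupport g) :
    ∫ x, ∑ k, pd φ k x * pd g k x = - ∫ x, lap φ x * g x := by
  have h1 : ∀ k : Fin N, Integrable (fun x => pd φ k x * pd g k x) := fun k =>
    cc_int ((pd_continuous (hφ.of_le one_le_two) k).mul (pd_continuous hg k))
      ((pd_hasCompactSupport hgc k).mul_left)
  have h2 : ∀ k : Fin N, Integrable (fun x => pd (pd φ k) k x * g x) := fun k =>
    cc_int ((pd_continuous (pd_contDiff hφ k) k).mul hg.continuous) (hgc.mul_left)
  rw [integral_finset_sum _ (fun k _ => h1 k)]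
  have : ∀ k ∈ Finset.univ, ∫ x, pd φ k x * pd g k x = - ∫ x, pd (pd φ k) k x * g x :=
    fun k _ => ibp_core (pd_contDiff hφ k) hg hgc k
  rw [Finset.sum_congr rfl this]
  rw [Finset.sum_neg_distrib, neg_inj, ← integral_finset_sum _ (fun k _ => h2 k)]
  congr 1
  ext x
  simp [lap, Finset.sum_mul]

end helpers

lemma Hpp_symm {m : ℕ} {H : EuclideanSpace ℝ (Fin m) → ℝ} (hH : ContDiff ℝ 2 H)
    (i j : Fin m) (p : EuclideanSpace ℝ (Fin m)) : Hpp H i j p = Hpp H j i p := by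
  have hsym : IsSymmSndFDerivAt ℝ H p := hH.contDiffAt.isSymmSndFDerivAt (by simp [minSmoothness_of_isRCLikeNormedField])
  have key : ∀ a b : Fin m, Hpp H a b p =
      fderiv ℝ (fderiv ℝ H) p (EuclideanSpace.single b 1) (EuclideanSpace.single a 1) := by
    intro a b
    have hdiff : DifferentiableAt ℝ (fderiv ℝ H) p :=
      (hH.fderiv_right (m := 1) (by norm_num)).differentiable one_ne_zero p
    have h2 := hdiff.hasFDerivAt.clm_apply
      (hasFDerivAt_const (EuclideanSpace.single a 1) p)
    unfold Hpp Hp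
    rw [h2.fderiv]
    simp
  rw [key i j, key j i]
  exact hsym.eq _ _

lemma key_alg {m : ℕ} (a : Fin m → Fin m → ℝ) (hsymm : ∀ i j, a i j = a j i)
    (hsign : ∀ i j, i < j → a i j ≤ 0) (s : Fin m → ℝ) :
    0 ≤ ∑ i, ∑ j, a i j * (s i * s j - s i ^ 2) := by
  have swap : ∑ i : Fin m, ∑ j : Fin m, (1/2 : ℝ) * (a i j * s j ^ 2)
      = ∑ i : Fin m, ∑ j : Fin m, (1/2 : ℝ) * (a i j * s i ^ 2) := by
    rw [Finset.sum_comm]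
    exact Finset.sum_congr rfl fun i _ => Finset.sum_congr rfl fun j _ => by rw [hsymm]
  have h0 : ∑ i : Fin m, ∑ j : Fin m,
      (a i j * (s i * s j - s i ^ 2) + (1/2 : ℝ) * (a i j * (s i - s j) ^ 2))
      = ∑ i : Fin m, ∑ j : Fin m,
      ((1/2 : ℝ) * (a i j * s j ^ 2) - (1/2 : ℝ) * (a i j * s i ^ 2)) :=
    Finset.sum_congr rfl fun i _ => Finset.sum_congr rfl fun j _ => by ring
  simp only [Finset.sum_add_distrib, Finset.sum_sub_distrib] at h0
  rw [swap, sub_self] at h0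
  have hneg : ∑ i : Fin m, ∑ j : Fin m, (1/2 : ℝ) * (a i j * (s i - s j) ^ 2) ≤ 0 := by
    refine Finset.sum_nonpos fun i _ => Finset.sum_nonpos fun j _ => ?_
    rcases lt_trichotomy i j with h | h | h
    · have := hsign i j h
      nlinarith [sq_nonneg (s i - s j)]
    · subst h; simp
    · have := hsign j i h
      rw [hsymm i j]
      nlinarith [sq_nonneg (s i - s j)]
  linarith

lemma main_ineq {N m : ℕ} {H : EuclideanSpace ℝ (Fin m) → ℝ} (hH : ContDiff ℝ 2 H)
    {u : EuclideanSpace ℝ (Fin N) → EuclideanSpace ℝ (Fin m)} (hu : Continuous u)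
    {lam : ℝ} (hlam : 0 ≤ lam)
    (φ ψ : Fin m → EuclideanSpace ℝ (Fin N) → ℝ)
    (hφ2 : ∀ i, ContDiff ℝ 2 (φ i))
    (hφeq : ∀ i x, lap (φ i) x = (∑ j, Hpp H i j (u x) * φ j x) - lam * φ i x)
    (hsign : ∀ i j, i < j → ∀ x, Hpp H i j (u x) * φ i x * φ j x ≤ 0)
    (hψ1 : ∀ i, ContDiff ℝ 1 (ψ i)) (hψc : ∀ i, HasCompactSupport (ψ i)) :
    0 ≤ (∑ i, ∫ x, ‖gradient (fun y => φ i y * ψ i y) x‖ ^ 2) +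
        ∑ i, ∑ j, ∫ x, Hpp H i j (u x) * (φ i x * ψ i x) * (φ j x * ψ j x) := by
  have hφ1 : ∀ i, ContDiff ℝ 1 (φ i) := fun i => (hφ2 i).of_le one_le_two
  have hφcont : ∀ i, Continuous (φ i) := fun i => (hφ1 i).continuous
  have hψcont : ∀ i, Continuous (ψ i) := fun i => (hψ1 i).continuous
  have hHu : ∀ i j : Fin m, Continuous fun x => Hpp H i j (u x) := fun i j =>
    (pd_continuous (pd_contDiff hH i) j).comp hu
  have hg1 : ∀ i, ContDiff ℝ 1 (fun x => φ i x * (ψ i x * ψ i x)) := fun i =>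
    (hφ1 i).mul ((hψ1 i).mul (hψ1 i))
  have hgc : ∀ i, HasCompactSupport (fun x => φ i x * (ψ i x * ψ i x)) := fun i =>
    HasCompactSupport.mul_left (HasCompactSupport.mul_left (hψc i))
  have hΦ1 : ∀ i, ContDiff ℝ 1 (fun x => φ i x * ψ i x) := fun i => (hφ1 i).mul (hψ1 i)
  have hΦc : ∀ i, HasCompactSupport (fun x => φ i x * ψ i x) := fun i =>
    HasCompactSupport.mul_left (hψc i)
  -- pointwise expansion of the gradient square
  have hpt : ∀ i x, ‖gradient (fun y => φ i y * ψ i y) x‖ ^ 2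
      = (∑ k, (φ i x * pd (ψ i) k x) ^ 2)
        + ∑ k, pd (φ i) k x * pd (fun y => φ i y * (ψ i y * ψ i y)) k x := by
    intro i x
    have hφd : DifferentiableAt ℝ (φ i) x := (hφ1 i).differentiable one_ne_zero x
    have hψd : DifferentiableAt ℝ (ψ i) x := (hψ1 i).differentiable one_ne_zero x
    rw [norm_gradient_sq (hφd.fun_mul hψd), ← Finset.sum_add_distrib]
    refine Finset.sum_congr rfl fun k _ => ?_
    rw [pd_mul hφd hψd k, pd_mul hφd (hψd.fun_mul hψd) k, pd_mul hψd hψd k]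
    ring
  -- integrability
  have hAint : ∀ i, Integrable (fun x => ∑ k, (φ i x * pd (ψ i) k x) ^ 2) := by
    intro i
    refine cc_int (continuous_finset_sum _ fun k _ =>
      (((hφcont i).mul (pd_continuous (hψ1 i) k)).pow 2)) ?_
    refine hcs_sum _ _ fun k _ => ?_
    have h1 : HasCompactSupport (fun x => φ i x * pd (ψ i) k x) :=
      HasCompactSupport.mul_left (pd_hasCompactSupport (hψc i) k)
    have : (fun x => (φ i x * pd (ψ i) k x) ^ 2)
        = fun x => (φ i x * pd (ψ i) k x) * (φ i x * pd (ψ i) k x) := by ext x; ring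
    rw [this]
    exact HasCompactSupport.mul_left h1
  have hBint : ∀ i, Integrable
      (fun x => ∑ k, pd (φ i) k x * pd (fun y => φ i y * (ψ i y * ψ i y)) k x) := by
    intro i
    refine cc_int (continuous_finset_sum _ fun k _ =>
      ((pd_continuous (hφ1 i) k).mul (pd_continuous (hg1 i) k))) ?_
    exact hcs_sum _ _ fun k _ =>
      HasCompactSupport.mul_left (pd_hasCompactSupport (hgc i) k)
  have hTint : ∀ i j, Integrable
      (fun x => Hpp H i j (u x) * (φ i x * ψ i x) * (φ j x * ψ j x)) := fun i j =>
    cc_int (((hHu i j).mul ((hφcont i).mul (hψcont i))).mul ((hφcont j).mul (hψcont j)))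
      (HasCompactSupport.mul_left (hΦc j))
  have hWint : ∀ i, Integrable (fun x => lam * (φ i x * ψ i x) ^ 2
      - (∑ j, Hpp H i j (u x) * φ j x) * (φ i x * (ψ i x * ψ i x))) := by
    intro i
    refine cc_int ?_ ?_
    · exact ((continuous_const.mul (((hφcont i).mul (hψcont i)).pow 2)).sub
        ((continuous_finset_sum _ fun j _ => (hHu i j).mul (hφcont j)).mul
          ((hφcont i).mul ((hψcont i).mul (hψcont i)))))
    · have h1 : HasCompactSupport (fun x => lam * (φ i x * ψ i x) ^ 2) := by
        have : (fun x => lam * (φ i x * ψ i x) ^ 2)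
            = fun x => (lam * (φ i x * ψ i x)) * (φ i x * ψ i x) := by ext x; ring
        rw [this]
        exact HasCompactSupport.mul_left (hΦc i)
      have h2 : HasCompactSupport (fun x =>
          (∑ j, Hpp H i j (u x) * φ j x) * (φ i x * (ψ i x * ψ i x))) :=
        HasCompactSupport.mul_left (hgc i)
      have heq : (fun x => lam * (φ i x * ψ i x) ^ 2
          - (∑ j, Hpp H i j (u x) * φ j x) * (φ i x * (ψ i x * ψ i x)))
          = fun x => lam * (φ i x * ψ i x) ^ 2
            + (-1 : ℝ) * ((∑ j, Hpp H i j (u x) * φ j x) * (φ i x * (ψ i x * ψ i x))) := by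
        ext x; ring
      rw [heq]
      exact h1.add (HasCompactSupport.mul_left h2)
  -- the energy identity for each i
  have hW : ∀ i, ∫ x, ‖gradient (fun y => φ i y * ψ i y) x‖ ^ 2
      = (∫ x, ∑ k, (φ i x * pd (ψ i) k x) ^ 2)
        + ∫ x, (lam * (φ i x * ψ i x) ^ 2
            - (∑ j, Hpp H i j (u x) * φ j x) * (φ i x * (ψ i x * ψ i x))) := by
    intro i
    simp only [hpt i]
    rw [integral_add (hAint i) (hBint i)]
    congr 1
    rw [ibp_lap (hφ2 i) (hg1 i) (hgc i)]
    have : (fun x => lap (φ i) x * (φ i x * (ψ i x * ψ i x)))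
        = fun x => (∑ j, Hpp H i j (u x) * φ j x) * (φ i x * (ψ i x * ψ i x))
          - lam * (φ i x * ψ i x) ^ 2 := by
      ext x
      rw [hφeq i x]
      ring
    rw [this, ← integral_neg]
    congr 1
    ext x
    ring
  -- collapse the double sum into single integrals
  have hT : ∀ i, ∑ j, ∫ x, Hpp H i j (u x) * (φ i x * ψ i x) * (φ j x * ψ j x)
      = ∫ x, ∑ j, Hpp H i j (u x) * (φ i x * ψ i x) * (φ j x * ψ j x) :=
    fun i => (integral_finset_sum _ fun j _ => hTint i j).symm
  simp only [hW, hT]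
  rw [Finset.sum_add_distrib, add_assoc]
  have h1 : 0 ≤ ∑ i, ∫ x, ∑ k, (φ i x * pd (ψ i) k x) ^ 2 :=
    Finset.sum_nonneg fun i _ => integral_nonneg fun x =>
      Finset.sum_nonneg fun k _ => sq_nonneg _
  have hTint' : ∀ i, Integrable
      (fun x => ∑ j, Hpp H i j (u x) * (φ i x * ψ i x) * (φ j x * ψ j x)) := fun i =>
    integrable_finset_sum _ fun j _ => hTint i j
  have h2 : 0 ≤ (∑ i, ∫ x, (lam * (φ i x * ψ i x) ^ 2
        - (∑ j, Hpp H i j (u x) * φ j x) * (φ i x * (ψ i x * ψ i x))))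
      + ∑ i, ∫ x, ∑ j, Hpp H i j (u x) * (φ i x * ψ i x) * (φ j x * ψ j x) := by
    rw [← Finset.sum_add_distrib]
    have step1 : ∀ i ∈ Finset.univ, (∫ x, (lam * (φ i x * ψ i x) ^ 2
          - (∑ j, Hpp H i j (u x) * φ j x) * (φ i x * (ψ i x * ψ i x))))
        + ∫ x, ∑ j, Hpp H i j (u x) * (φ i x * ψ i x) * (φ j x * ψ j x)
        = ∫ x, ((lam * (φ i x * ψ i x) ^ 2
            - (∑ j, Hpp H i j (u x) * φ j x) * (φ i x * (ψ i x * ψ i x)))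
          + ∑ j, Hpp H i j (u x) * (φ i x * ψ i x) * (φ j x * ψ j x)) :=
      fun i _ => (integral_add (hWint i) (hTint' i)).symm
    rw [Finset.sum_congr rfl step1]
    rw [← integral_finset_sum _
      (f := fun i x => (lam * (φ i x * ψ i x) ^ 2
          - (∑ j, Hpp H i j (u x) * φ j x) * (φ i x * (ψ i x * ψ i x)))
        + ∑ j, Hpp H i j (u x) * (φ i x * ψ i x) * (φ j x * ψ j x))
      (fun i _ => ((hWint i).add (hTint' i)))]
    refine integral_nonneg fun x => ?_
    have key := key_alg (fun i j => Hpp H i j (u x) * φ i x * φ j x)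
      (fun i j => by
        show Hpp H i j (u x) * φ i x * φ j x = Hpp H j i (u x) * φ j x * φ i x
        rw [Hpp_symm hH i j (u x)]; ring)
      (fun i j hij => hsign i j hij x) (fun i => ψ i x)
    have lampart : 0 ≤ lam * ∑ i, (φ i x * ψ i x) ^ 2 :=
      mul_nonneg hlam (Finset.sum_nonneg fun i _ => sq_nonneg _)
    have rewr : ∑ i, ((lam * (φ i x * ψ i x) ^ 2
          - (∑ j, Hpp H i j (u x) * φ j x) * (φ i x * (ψ i x * ψ i x)))
        + ∑ j, Hpp H i j (u x) * (φ i x * ψ i x) * (φ j x * ψ j x))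
        = lam * (∑ i, (φ i x * ψ i x) ^ 2)
          + ∑ i, ∑ j, (Hpp H i j (u x) * φ i x * φ j x)
              * (ψ i x * ψ j x - ψ i x ^ 2) := by
      rw [Finset.mul_sum, ← Finset.sum_add_distrib]
      refine Finset.sum_congr rfl fun i _ => ?_
      rw [Finset.sum_mul]
      rw [show ∀ A B C : ℝ, (A - B) + C = A + (C - B) from fun A B C => by ring]
      congr 1
      rw [← Finset.sum_sub_distrib]
      exact Finset.sum_congr rfl fun j _ => by ring
    rw [rewr]
    exact add_nonneg lampart key
  linarith

/-- a pointwise stable solution of `Δu = ∇H(u)` on `ℝ^N` is stable. -/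
theorem stmt_4 (N m : ℕ)
    (H : EuclideanSpace ℝ (Fin m) → ℝ) (hH : ContDiff ℝ 2 H)
    (u : EuclideanSpace ℝ (Fin N) → EuclideanSpace ℝ (Fin m)) (hu : ContDiff ℝ 2 u)
    (hsol : IsSolution H u Set.univ)
    (hps : PointwiseStable H u Set.univ) :
    Stable H u Set.univ := by
  intro ζ hζ1 hζc hζΩ
  obtain ⟨lam, φ, hlam, hφ2, hφne0, hφeq0, hsign0⟩ := hps
  have hφne : ∀ i x, φ i x ≠ 0 := fun i x => hφne0 i x (Set.mem_univ x)
  simp only [MeasureTheory.setIntegral_univ]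
  set ψ : Fin m → EuclideanSpace ℝ (Fin N) → ℝ := fun i x => ζ i x / φ i x with hψdef
  have hζeq : ∀ i, ζ i = fun x => φ i x * ψ i x := by
    intro i; funext x
    rw [hψdef]
    field_simp
    exact (mul_div_cancel_right₀ _ (hφne i x)).symm
  have hψ1 : ∀ i, ContDiff ℝ 1 (ψ i) := fun i =>
    (hζ1 i).div ((hφ2 i).of_le one_le_two) (fun x => hφne i x)
  have hψc : ∀ i, HasCompactSupport (ψ i) := by
    intro i
    apply (hζc i).mono
    intro x hx
    simp only [Function.mem_support] at hx ⊢
    intro h0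
    apply hx
    rw [hψdef]
    simp [h0]
  simp only [hζeq]
  exact main_ineq hH hu.continuous hlam φ ψ hφ2
    (fun i x => hφeq0 i x (Set.mem_univ x))
    (fun i j hij x => hsign0 i j hij x (Set.mem_univ x)) hψ1 hψc
end
end

section
/- Let m ≥ 1, let (a_{ij})_{1≤i,j≤m} be real numbers with a_{ij} = a_{ji} for all i, j, let φ_1,…,φ_m be nonzero real numbers with a_{ij} φ_i φ_j ≤ 0 for all i ≠ j, and let ζ_1,…,ζ_m ∈ ℝ. Then Σ_{i,j=1}^m a_{ij} (φ_j/φ_i) ζ_i² ≤ Σ_{i,j=1}^m a_{ij} ζ_i ζ_j. -/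
open Finset

/-- the pointwise algebraic inequality used to show that pointwise
stable solutions are stable: for symmetric `a_{ij}`, nonzero `φ_i` with
`a_{ij} φ_i φ_j ≤ 0` for `i ≠ j`, and any `ζ_i`,
`Σ_{i,j} a_{ij} (φ_j/φ_i) ζ_i² ≤ Σ_{i,j} a_{ij} ζ_i ζ_j`. -/
theorem stmt_19 (m : ℕ) (hm : 1 ≤ m) (a : Fin m → Fin m → ℝ)
    (hsymm : ∀ i j, a i j = a j i)
    (φ : Fin m → ℝ) (hφ : ∀ i, φ i ≠ 0)
    (hsign : ∀ i j, i ≠ j → a i j * φ i * φ j ≤ 0)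
    (ζ : Fin m → ℝ) :
    (∑ i, ∑ j, a i j * (φ j / φ i) * ζ i ^ 2) ≤ ∑ i, ∑ j, a i j * ζ i * ζ j := by
  set f : Fin m → Fin m → ℝ :=
    fun i j => a i j * ζ i * ζ j - a i j * (φ j / φ i) * ζ i ^ 2 with hf
  have key : ∀ i j, 0 ≤ f i j + f j i := by
    intro i j
    rcases eq_or_ne i j with rfl | h
    · have h1 := hφ i
      simp only [hf]
      field_simp
      rw [sq, mul_assoc]
      norm_num
    · have hb := hsign i j h
      have h1 := hφ i
      have h2 := hφ j
      have heq : f i j + f j i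
          = -(a i j * φ i * φ j) * (ζ i / φ i - ζ j / φ j) ^ 2 := by
        simp only [hf, hsymm j i]
        field_simp
        ring
      rw [heq]
      exact mul_nonneg (neg_nonneg.2 hb) (sq_nonneg _)
  have h2 : 0 ≤ ∑ i, ∑ j, f i j := by
    have hsum : ∑ i, ∑ j, (f i j + f j i) = 2 * ∑ i, ∑ j, f i j := by
      simp only [Finset.sum_add_distrib]
      rw [Finset.sum_comm (f := fun i j => f j i)]
      ring
    have h3 : (0:ℝ) ≤ ∑ i, ∑ j, (f i j + f j i) :=
      Finset.sum_nonneg fun i _ => Finset.sum_nonneg fun j _ => key i j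
    linarith [hsum ▸ h3]
  have heq : (∑ i, ∑ j, a i j * ζ i * ζ j) - (∑ i, ∑ j, a i j * (φ j / φ i) * ζ i ^ 2)
      = ∑ i, ∑ j, f i j := by
    simp only [hf, ← Finset.sum_sub_distrib]
  linarith
end
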